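/- For all real a ≥ 5/2 and all real x ≥ a^6/120, the upper incomplete gamma function satisfies Γ(a,x) ≤ (52/17) · x^{a-1} · e^{-x}. -/

import Mathlib

open Real MeasureTheory

/-- The upper incomplete gamma function `Γ(a, x) = ∫_x^∞ t^(a-1) e^(-t) dt`. -/
noncomputable def gammaUpper (a x : ℝ) : ℝ :=
  ∫ t in Set.Ioi x, t ^ (a - 1) * Real.exp (-t)

private lemma tendsto_aux (s : ℕ) :
    Filter.Tendsto (fun t : ℝ => t ^ s * Real.exp (-(9/10) * t)) Filter.atTop (nhds 0) := by
  have h := tendsto_rpow_mul_exp_neg_mul_atTop_nhds_zero s (9/10) (by norm_num)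
  refine h.congr fun t => ?_
  rw [Real.rpow_natCast]

private lemma hasDerivAt_aux (t : ℝ) :
    HasDerivAt (fun t : ℝ => -(10/9 * t^2 + 200/81 * t + 2000/729) * Real.exp (-(9/10) * t))
      (t ^ 2 * Real.exp (-(9/10) * t)) t := by
  have h1 : HasDerivAt (fun t : ℝ => -(10/9 * t^2 + 200/81 * t + 2000/729))
      (-(10/9 * (2 * t) + 200/81)) t := by
    have := (((hasDerivAt_pow 2 t).const_mul (10/9 : ℝ)).add
      ((hasDerivAt_id t).const_mul (200/81 : ℝ))).add_const (2000/729 : ℝ)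
    exact this.neg.congr_deriv (by norm_num)
  have h2 : HasDerivAt (fun t : ℝ => Real.exp (-(9/10) * t))
      ((-(9/10)) * Real.exp (-(9/10) * t)) t := by
    simpa [mul_comm] using ((hasDerivAt_id t).const_mul (-(9/10) : ℝ)).exp
  have := h1.mul h2
  refine this.congr_deriv ?_
  ring

private lemma tendsto_poly_exp :
    Filter.Tendsto (fun t : ℝ => -(10/9 * t^2 + 200/81 * t + 2000/729) * Real.exp (-(9/10) * t))
      Filter.atTop (nhds 0) := by
  have h := ((((tendsto_aux 2).const_mul (10/9 : ℝ)).add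
    ((tendsto_aux 1).const_mul (200/81 : ℝ))).add
    ((tendsto_aux 0).const_mul (2000/729 : ℝ))).neg
  have h0 : -(10/9 * (0:ℝ) + 200/81 * 0 + 2000/729 * 0) = 0 := by norm_num
  rw [show -((10/9 : ℝ) * 0 + 200/81 * 0 + 2000/729 * 0) = 0 by norm_num] at h
  refine h.congr fun t => ?_
  ring

private lemma integrable_aux (x : ℝ) :
    MeasureTheory.IntegrableOn (fun t : ℝ => t ^ 2 * Real.exp (-(9/10) * t)) (Set.Ioi x) :=
  integrableOn_Ioi_deriv_of_nonneg' (fun t _ => hasDerivAt_aux t)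
    (fun t _ => by positivity) tendsto_poly_exp

private lemma integral_aux (x : ℝ) :
    ∫ t in Set.Ioi x, t ^ 2 * Real.exp (-(9/10) * t)
      = (10/9 * x^2 + 200/81 * x + 2000/729) * Real.exp (-(9/10) * x) := by
  have h := integral_Ioi_of_hasDerivAt_of_nonneg'
    (g := fun t : ℝ => -(10/9 * t^2 + 200/81 * t + 2000/729) * Real.exp (-(9/10) * t))
    (g' := fun t : ℝ => t ^ 2 * Real.exp (-(9/10) * t)) (a := x) (l := 0)
    (fun t _ => hasDerivAt_aux t) (fun t _ => by positivity) tendsto_poly_exp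
  rw [h]
  ring

private lemma poly_ineq (a : ℝ) (ha : 5/2 ≤ a) : 1200 * (a - 3) ≤ a ^ 6 := by
  nlinarith [sq_nonneg (a - 3), sq_nonneg (a^2 - 9), sq_nonneg (a^3 - 15), sq_nonneg a,
    sq_nonneg (a^2 - 5*a), pow_pos (show (0:ℝ) < a by linarith) 6]

theorem gammaUpper_le (a x : ℝ) (ha : 5/2 ≤ a) (hx : a ^ 6 / 120 ≤ x) :
    gammaUpper a x ≤ 52 / 17 * x ^ (a - 1) * Real.exp (-x) := by
  have ha0 : (0:ℝ) < a := by linarith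
  have hx0 : (0:ℝ) < x := lt_of_lt_of_le (by positivity) hx
  have hxb : (3125:ℝ)/1536 ≤ x := by
    refine le_trans ?_ hx
    have : (5/2:ℝ)^6 ≤ a^6 := by
      apply pow_le_pow_left₀ (by norm_num) ha 6
    nlinarith
  set K : ℝ := x ^ (a-1) * Real.exp (-x) * Real.exp ((9/10) * x) / x^2 with hK
  have hK0 : 0 ≤ K := by positivity
  -- pointwise bound
  have hpt : ∀ t ∈ Set.Ioi x, t ^ (a-1) * Real.exp (-t) ≤ K * (t^2 * Real.exp (-(9/10)*t)) := by
    intro t ht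
    have htx : x < t := ht
    have ht0 : (0:ℝ) < t := lt_trans hx0 htx
    have hlog : Real.log t - Real.log x ≤ (t - x) / x := by
      have h1 : Real.log (t / x) ≤ t / x - 1 := Real.log_le_sub_one_of_pos (by positivity)
      rw [Real.log_div (ne_of_gt ht0) (ne_of_gt hx0)] at h1
      have : t / x - 1 = (t - x) / x := by field_simp
      linarith [this ▸ h1]
    have hlog0 : 0 ≤ Real.log t - Real.log x :=
      sub_nonneg.mpr (Real.log_le_log hx0 htx.le)
    have hmain : (a - 3) * (Real.log t - Real.log x) ≤ (1/10) * (t - x) := by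
      rcases le_or_gt a 3 with h3 | h3
      · have : (a - 3) * (Real.log t - Real.log x) ≤ 0 :=
          mul_nonpos_of_nonpos_of_nonneg (by linarith) hlog0
        linarith
      · have h10 : 10 * (a - 3) ≤ x := by
          have := poly_ineq a ha
          linarith [hx, (by linarith : 1200 * (a-3) / 120 ≤ a^6/120)]
        have hstep : (a - 3) * (Real.log t - Real.log x) ≤ (a - 3) * ((t - x) / x) :=
          mul_le_mul_of_nonneg_left hlog (by linarith)
        have hstep2 : (a - 3) * ((t - x) / x) ≤ (1/10) * (t - x) := by
          have htx0 : 0 ≤ t - x := by linarith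
          calc (a-3) * ((t-x)/x) = ((a-3)/x) * (t-x) := by ring
            _ ≤ (1/10) * (t - x) := by
                apply mul_le_mul_of_nonneg_right _ htx0
                rw [div_le_iff₀ hx0]; linarith
        linarith
    -- rewrite both sides as exponentials
    have hLHS : t ^ (a-1) * Real.exp (-t) = Real.exp ((a-1) * Real.log t - t) := by
      rw [Real.rpow_def_of_pos ht0, ← Real.exp_add]; ring_nf
    have ht2 : t^2 = Real.exp (2 * Real.log t) := by
      rw [mul_comm, Real.exp_mul, Real.exp_log ht0]; norm_num
    have hx2 : (x:ℝ)^(a-1) = Real.exp ((a-1) * Real.log x) := by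
      rw [Real.rpow_def_of_pos hx0]; ring_nf
    have hxx2 : (x:ℝ)^2 = Real.exp (2 * Real.log x) := by
      rw [mul_comm, Real.exp_mul, Real.exp_log hx0]; norm_num
    have hRHS : K * (t^2 * Real.exp (-(9/10)*t))
        = Real.exp ((a-1) * Real.log x - x + (9/10)*x - 2 * Real.log x
            + 2 * Real.log t - (9/10)*t) := by
      rw [hK, hx2, hxx2, ht2]
      rw [div_eq_mul_inv, ← Real.exp_neg]
      rw [← Real.exp_add, ← Real.exp_add, ← Real.exp_add, ← Real.exp_add, ← Real.exp_add]
      congr 1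
      ring
    rw [hLHS, hRHS]
    apply Real.exp_le_exp.mpr
    nlinarith [hmain]
  -- integrability of LHS
  have hfi : MeasureTheory.IntegrableOn (fun t : ℝ => t ^ (a-1) * Real.exp (-t)) (Set.Ioi x) := by
    have h := Real.GammaIntegral_convergent ha0
    have h2 : MeasureTheory.IntegrableOn (fun t : ℝ => Real.exp (-t) * t ^ (a-1)) (Set.Ioi x) :=
      h.mono_set (Set.Ioi_subset_Ioi hx0.le)
    exact h2.congr_fun (fun t _ => mul_comm _ _) measurableSet_Ioi
  have hgi : MeasureTheory.IntegrableOn (fun t : ℝ => K * (t^2 * Real.exp (-(9/10)*t)))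
      (Set.Ioi x) := (integrable_aux x).const_mul K
  have hle : gammaUpper a x ≤ ∫ t in Set.Ioi x, K * (t^2 * Real.exp (-(9/10)*t)) := by
    exact MeasureTheory.setIntegral_mono_on hfi hgi measurableSet_Ioi hpt
  have hval : ∫ t in Set.Ioi x, K * (t^2 * Real.exp (-(9/10)*t))
      = K * ((10/9 * x^2 + 200/81 * x + 2000/729) * Real.exp (-(9/10) * x)) := by
    rw [MeasureTheory.integral_const_mul, integral_aux]
  rw [hval] at hle
  refine le_trans hle ?_
  -- final numeric inequality
  have hq : 10/9 * x^2 + 200/81 * x + 2000/729 ≤ 52/17 * x^2 := by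
    nlinarith [sq_nonneg (x - 3125/1536), mul_nonneg (sub_nonneg.mpr hxb) hx0.le]
  have hee : Real.exp ((9/10)*x) * Real.exp (-(9/10)*x) = 1 := by
    rw [← Real.exp_add]; norm_num
  have hexpand : K * ((10/9 * x^2 + 200/81 * x + 2000/729) * Real.exp (-(9/10) * x))
      = x ^ (a-1) * Real.exp (-x) * ((10/9 * x^2 + 200/81 * x + 2000/729) / x^2) := by
    have hee : Real.exp ((9/10) * x) * Real.exp (-(9/10) * x) = 1 := by
      rw [← Real.exp_add]; norm_num
    calc K * ((10/9 * x^2 + 200/81 * x + 2000/729) * Real.exp (-(9/10) * x))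
        = x ^ (a-1) * Real.exp (-x) * ((10/9 * x^2 + 200/81 * x + 2000/729) / x^2)
            * (Real.exp ((9/10) * x) * Real.exp (-(9/10) * x)) := by rw [hK]; ring
      _ = x ^ (a-1) * Real.exp (-x) * ((10/9 * x^2 + 200/81 * x + 2000/729) / x^2) := by
            rw [hee, mul_one]
  rw [hexpand]
  have hrp : (0:ℝ) ≤ x ^ (a-1) := Real.rpow_nonneg hx0.le _
  have hdiv : (10/9 * x^2 + 200/81 * x + 2000/729) / x^2 ≤ 52/17 := by
    rw [div_le_iff₀ (by positivity)]
    linarith [hq]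
  calc x ^ (a-1) * Real.exp (-x) * ((10/9 * x^2 + 200/81 * x + 2000/729) / x^2)
      ≤ x ^ (a-1) * Real.exp (-x) * (52/17) := by
        apply mul_le_mul_of_nonneg_left hdiv (by positivity)
    _ = 52/17 * x ^ (a-1) * Real.exp (-x) := by ring
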